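/- Let β = (1−τ)/τ ≥ 1 and S = {Q ≪ P : ∃ a > 0, a ≤ dQ/dP ≤ βa a.s.}. If a measurable set A satisfies 0 < P[A] < 1, then the probability measure Q with density dQ/dP = a·1_A + βa·1_{A^c}, where a = 1/(β·P[A^c] + P[A]), is an extreme point of the convex set S (identified with the set of its densities in L¹). -/

import Mathlib

open scoped Classical

open MeasureTheory

lemma integral_ite_const' {Ω : Type*} [MeasurableSpace Ω] (P : Measure Ω) [IsFiniteMeasure P]
    {A : Set Ω} (hA : MeasurableSet A) (c d : ℝ) :
    ∫ ω, (if ω ∈ A then c else d) ∂P = c * (P A).toReal + d * (P Aᶜ).toReal := by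
  have heq : (fun ω => if ω ∈ A then c else d)
      = fun ω => A.indicator (fun _ => c) ω + Aᶜ.indicator (fun _ => d) ω := by
    funext ω; by_cases hω : ω ∈ A <;> simp [Set.indicator, hω]
  rw [heq, integral_add ((integrable_const c).indicator hA)
      ((integrable_const d).indicator hA.compl),
    integral_indicator_const _ hA, integral_indicator_const _ hA.compl]
  simp [smul_eq_mul]; simp only [measureReal_def]; ring

lemma exists_mem_of_ae' {Ω : Type*} [MeasurableSpace Ω] {P : Measure Ω} {A : Set Ω}
    {p : Ω → Prop} (hp : ∀ᵐ ω ∂P, p ω) (hA0 : P A ≠ 0) : ∃ ω ∈ A, p ω := by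
  by_contra hc
  push_neg at hc
  exact hA0 (measure_mono_null (fun ω hω => hc ω hω) (ae_iff.mp hp))

/-- Let `β = (1−τ)/τ` and let `S` be the set of probability densities `g` (w.r.t. `P`)
with `c ≤ g ≤ β·c` a.s. for some `c > 0`.  If `0 < P[A] < 1`, then the density
`h = a·1_A + β·a·1_{Aᶜ}` with `a = 1/(β·P[Aᶜ] + P[A])` belongs to `S` and is an
extreme point of `S`: if `h = (f+g)/2` a.s. with `f, g ∈ S`, then `f = g = h` a.s. -/
theorem stmt_6 {Ω : Type*} [MeasurableSpace Ω] (P : Measure Ω) [IsProbabilityMeasure P]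
    (τ : ℝ) (hτ0 : 0 < τ) (hτ : τ ≤ 1 / 2)
    (A : Set Ω) (hA : MeasurableSet A) (hA0 : 0 < P A) (hA1 : P A < 1) :
    let β : ℝ := (1 - τ) / τ
    let a : ℝ := 1 / (β * (P Aᶜ).toReal + (P A).toReal)
    let h : Ω → ℝ := fun ω => if ω ∈ A then a else β * a
    let Sdens : (Ω → ℝ) → Prop := fun g =>
      Integrable g P ∧ (∫ ω, g ω ∂P = 1) ∧ ∃ c > 0, ∀ᵐ ω ∂P, c ≤ g ω ∧ g ω ≤ β * c
    Sdens h ∧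
      ∀ f g : Ω → ℝ, Sdens f → Sdens g →
        (h =ᵐ[P] fun ω => (f ω + g ω) / 2) → f =ᵐ[P] h ∧ g =ᵐ[P] h := by
  intro β a h Sdens
  have hβ1 : (1 : ℝ) ≤ β := by
    rw [le_div_iff₀ hτ0]; linarith
  have hβ0 : (0 : ℝ) < β := lt_of_lt_of_le one_pos hβ1
  -- measure facts
  have hPA : 0 < (P A).toReal := ENNReal.toReal_pos hA0.ne' (measure_ne_top P A)
  have hPAc0 : P Aᶜ ≠ 0 := by
    intro h0
    have hsum := measure_add_measure_compl (μ := P) hA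
    rw [h0, add_zero, measure_univ] at hsum
    exact hA1.ne hsum
  have hPAc : 0 < (P Aᶜ).toReal := ENNReal.toReal_pos hPAc0 (measure_ne_top P Aᶜ)
  set D : ℝ := β * (P Aᶜ).toReal + (P A).toReal with hDdef
  have hD : 0 < D := add_pos (mul_pos hβ0 hPAc) hPA
  have ha_def : a = 1 / D := rfl
  have ha0 : 0 < a := by rw [ha_def]; positivity
  have hh : ∀ ω, h ω = if ω ∈ A then a else β * a := fun _ => rfl
  have haD : a * D = 1 := by rw [ha_def]; field_simp
  -- h ∈ S
  have hSh : Sdens h := by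
    refine ⟨?_, ?_, a, ha0, ?_⟩
    · have heq : h = fun ω => A.indicator (fun _ => a) ω + Aᶜ.indicator (fun _ => β * a) ω := by
        funext ω; rw [hh ω]; by_cases hω : ω ∈ A <;> simp [Set.indicator, hω]
      rw [heq]
      exact ((integrable_const a).indicator hA).add ((integrable_const (β * a)).indicator hA.compl)
    · have : ∫ ω, h ω ∂P = a * (P A).toReal + β * a * (P Aᶜ).toReal :=
        integral_ite_const' P hA a (β * a)
      rw [this]
      calc a * (P A).toReal + β * a * (P Aᶜ).toReal = a * D := by rw [hDdef]; ring
        _ = 1 := haD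
    · refine Filter.Eventually.of_forall fun ω => ?_
      rw [hh ω]
      by_cases hω : ω ∈ A <;> simp only [hω, if_true, if_false] <;> constructor
      · exact le_refl a
      · exact le_mul_of_one_le_left ha0.le hβ1
      · exact le_mul_of_one_le_left ha0.le hβ1
      · exact le_refl (β * a)
  refine ⟨hSh, ?_⟩
  rintro f g ⟨hfi, hfint, cf, hcf, hfae⟩ ⟨hgi, hgint, cg, hcg, hgae⟩ hfg
  have hae : ∀ᵐ ω ∂P, h ω = (f ω + g ω) / 2 ∧ (cf ≤ f ω ∧ f ω ≤ β * cf)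
      ∧ (cg ≤ g ω ∧ g ω ≤ β * cg) := hfg.and (hfae.and hgae)
  -- point in A gives cf + cg ≤ 2a
  obtain ⟨ω₁, hω₁A, hp₁, ⟨hf₁, _⟩, hg₁, _⟩ := exists_mem_of_ae' hae hA0.ne'
  rw [hh ω₁, if_pos hω₁A] at hp₁
  have hle : cf + cg ≤ 2 * a := by linarith
  -- point in Aᶜ gives 2a ≤ cf + cg
  obtain ⟨ω₂, hω₂A, hp₂, ⟨_, hf₂⟩, _, hg₂⟩ := exists_mem_of_ae' hae hPAc0
  rw [hh ω₂, if_neg hω₂A] at hp₂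
  have hge : 2 * a ≤ cf + cg := by
    have h2 : β * (2 * a) ≤ β * (cf + cg) := by linarith
    exact le_of_mul_le_mul_left h2 hβ0
  have hsum : cf + cg = 2 * a := le_antisymm hle hge
  -- pointwise identification a.e.
  have hfeq : f =ᵐ[P] fun ω => if ω ∈ A then cf else β * cf := by
    filter_upwards [hae] with ω ⟨hhw, ⟨hf1, hf2⟩, hg1, hg2⟩
    rw [hh ω] at hhw
    by_cases hω : ω ∈ A
    · rw [if_pos hω] at hhw ⊢; linarith
    · rw [if_neg hω] at hhw ⊢
      have : β * (cf + cg) = 2 * (β * a) := by rw [hsum]; ring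
      linarith
  have hgeq : g =ᵐ[P] fun ω => if ω ∈ A then cg else β * cg := by
    filter_upwards [hae] with ω ⟨hhw, ⟨hf1, hf2⟩, hg1, hg2⟩
    rw [hh ω] at hhw
    by_cases hω : ω ∈ A
    · rw [if_pos hω] at hhw ⊢; linarith
    · rw [if_neg hω] at hhw ⊢
      have : β * (cf + cg) = 2 * (β * a) := by rw [hsum]; ring
      linarith
  -- integral normalization forces cf = a, cg = a
  have hcfa : cf = a := by
    have hint : ∫ ω, f ω ∂P = cf * (P A).toReal + β * cf * (P Aᶜ).toReal := by
      rw [integral_congr_ae hfeq]; exact integral_ite_const' P hA cf (β * cf)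
    have hcfD : cf * D = 1 := by
      rw [hfint] at hint
      rw [hDdef]; linarith [hint]; 
    have : cf * D = a * D := by rw [hcfD, haD]
    exact mul_right_cancel₀ hD.ne' this
  have hcga : cg = a := by linarith
  constructor
  · refine hfeq.trans (Filter.Eventually.of_forall fun ω => ?_)
    rw [hh ω, hcfa]
  · refine hgeq.trans (Filter.Eventually.of_forall fun ω => ?_)
    rw [hh ω, hcga]
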